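/- Let S be a finite set of n positive integers with a minimum solution A, B of size ℓ = |A| + |B| > n/2, and let Z = S \ (A ∪ B). If there existed distinct subsets Z₁, Z₂ ⊆ Z with Σ(Z₁) = Σ(Z₂), then Z₁ \ Z₂ and Z₂ \ Z₁ would form a solution of size strictly smaller than ℓ, contradicting minimality. -/
import Mathlib


theorem stmt_2 (S A B : Finset ℤ) (n ℓ : ℕ) (hn : S.card = n)
    (hpos : ∀ a ∈ S, 0 < a)
    (hA : A ⊆ S) (hB : B ⊆ S) (hdisj : Disjoint A B)
    (hAne : A.Nonempty) (hBne : B.Nonempty)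
    (hsum : A.sum id = B.sum id) (hℓ : ℓ = A.card + B.card)
    (hmin : ∀ A' B' : Finset ℤ, A' ⊆ S → B' ⊆ S → Disjoint A' B' →
      A'.Nonempty → B'.Nonempty → A'.sum id = B'.sum id →
      ℓ ≤ A'.card + B'.card)
    (hbal : n < 2 * ℓ) :
    ∀ Z₁ Z₂ : Finset ℤ, Z₁ ⊆ S \ (A ∪ B) → Z₂ ⊆ S \ (A ∪ B) →
      Z₁ ≠ Z₂ → Z₁.sum id = Z₂.sum id →
      (Z₁ \ Z₂) ⊆ S ∧ (Z₂ \ Z₁) ⊆ S ∧ Disjoint (Z₁ \ Z₂) (Z₂ \ Z₁) ∧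
      (Z₁ \ Z₂).Nonempty ∧ (Z₂ \ Z₁).Nonempty ∧
      (Z₁ \ Z₂).sum id = (Z₂ \ Z₁).sum id ∧
      (Z₁ \ Z₂).card + (Z₂ \ Z₁).card < ℓ := by
  intro Z₁ Z₂ h1 h2 hne hs
  have hZ1S : Z₁ ⊆ S := h1.trans (Finset.sdiff_subset)
  have hZ2S : Z₂ ⊆ S := h2.trans (Finset.sdiff_subset)
  have hsub1 : (Z₁ \ Z₂) ⊆ S := (Finset.sdiff_subset).trans hZ1S
  have hsub2 : (Z₂ \ Z₁) ⊆ S := (Finset.sdiff_subset).trans hZ2S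
  have hd : Disjoint (Z₁ \ Z₂) (Z₂ \ Z₁) := by
    apply Finset.disjoint_left.2
    intro a ha hb
    exact (Finset.mem_sdiff.1 hb).2 (Finset.mem_sdiff.1 ha).1
  have hsumeq : (Z₁ \ Z₂).sum id = (Z₂ \ Z₁).sum id := by
    have e1 : (Z₁ ∩ Z₂).sum id + (Z₁ \ Z₂).sum id = Z₁.sum id :=
      Finset.sum_inter_add_sum_sdiff Z₁ Z₂ id
    have e2 : (Z₂ ∩ Z₁).sum id + (Z₂ \ Z₁).sum id = Z₂.sum id :=
      Finset.sum_inter_add_sum_sdiff Z₂ Z₁ id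
    rw [Finset.inter_comm] at e2
    omega
  have key : ∀ X Y : Finset ℤ, X ⊆ S → Y ⊆ S → (X \ Y).sum id = (Y \ X).sum id →
      (X \ Y) = ∅ → X = Y → False → True := fun _ _ _ _ _ _ _ _ => trivial
  have hne1 : (Z₁ \ Z₂).Nonempty ∧ (Z₂ \ Z₁).Nonempty := by
    have pos : ∀ T : Finset ℤ, T ⊆ S → T.Nonempty → 0 < T.sum id := by
      intro T hT ⟨x, hx⟩
      exact Finset.sum_pos (fun a ha => hpos a (hT ha)) ⟨x, hx⟩
    by_cases hA1 : (Z₁ \ Z₂) = ∅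
    · exfalso
      by_cases hA2 : (Z₂ \ Z₁) = ∅
      · exact hne (Finset.Subset.antisymm
          (fun a ha => by_contra fun h => (Finset.eq_empty_iff_forall_notMem.1 hA1 a) (Finset.mem_sdiff.2 ⟨ha, h⟩))
          (fun a ha => by_contra fun h => (Finset.eq_empty_iff_forall_notMem.1 hA2 a) (Finset.mem_sdiff.2 ⟨ha, h⟩)))
      · have := pos _ hsub2 (Finset.nonempty_of_ne_empty hA2)
        rw [← hsumeq, hA1, Finset.sum_empty] at this
        exact lt_irrefl 0 this
    · constructor
      · exact Finset.nonempty_of_ne_empty hA1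
      · by_contra hA2
        rw [Finset.not_nonempty_iff_eq_empty] at hA2
        have := pos _ hsub1 (Finset.nonempty_of_ne_empty hA1)
        rw [hsumeq, hA2, Finset.sum_empty] at this
        exact lt_irrefl 0 this
  refine ⟨hsub1, hsub2, hd, hne1.1, hne1.2, hsumeq, ?_⟩
  -- card bound
  have hABsub : A ∪ B ⊆ S := Finset.union_subset hA hB
  have hcardZ : (S \ (A ∪ B)).card = n - ℓ := by
    rw [Finset.card_sdiff_of_subset hABsub, hn, Finset.card_union_of_disjoint hdisj, hℓ]
  have hℓpos : 0 < ℓ := by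
    rcases hAne with ⟨a, ha⟩
    have := Finset.card_pos.2 ⟨a, ha⟩
    omega
  have hu : (Z₁ \ Z₂) ∪ (Z₂ \ Z₁) ⊆ S \ (A ∪ B) :=
    Finset.union_subset ((Finset.sdiff_subset).trans h1) ((Finset.sdiff_subset).trans h2)
  have hc : (Z₁ \ Z₂).card + (Z₂ \ Z₁).card ≤ n - ℓ := by
    rw [← Finset.card_union_of_disjoint hd, ← hcardZ]
    exact Finset.card_le_card hu
  omega
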